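/- Let W be a reduced word in the free product G₁ ∗ G₂ having a period γ with γ < ℓ(W) (any such period is even, since consecutive letters of a reduced word alternate between the two factors), and suppose that no letter of W has order 2. Then W has no subword of the form w r w⁻¹, where r is a letter and w is a word with ℓ(w) ≥ γ/2. -/
import Mathlib


namespace FreeProductWords

variable {G : Bool → Type*} [∀ i, Group (G i)]

/-- A reduced word in the free product `G₁ ∗ G₂` of the two groups `G true` and `G false`:
every letter is nontrivial and consecutive letters lie in different factors. -/
def Reduced (W : List (Σ i, G i)) : Prop :=
  (∀ x ∈ W, x.2 ≠ 1) ∧ W.Chain' fun u v => u.1 ≠ v.1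

/-- The inverse word `w⁻¹ = x_m⁻¹ ⋯ x₂⁻¹ x₁⁻¹` of the word `w = x₁x₂⋯x_m`. -/
def invWord (w : List (Σ i, G i)) : List (Σ i, G i) :=
  (w.map fun x => ⟨x.1, x.2⁻¹⟩).reverse

/-- The word `W` has period `p`: `W_i = W_{i+p}` whenever both positions lie in `W`. -/
def HasPeriod (W : List (Σ i, G i)) (p : ℕ) : Prop :=
  ∀ i, i + p < W.length → W[i]? = W[i + p]?

/-- Let `W` be a reduced word in the free product `G₁ ∗ G₂` having a period `γ < ℓ(W)`
(such a period is necessarily even), and suppose no letter of `W` has order 2.  Then `W`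
has no subword of the form `w r w⁻¹` with `r` a letter and `ℓ(w) ≥ γ/2`
(i.e. `2·ℓ(w) ≥ γ`). -/
theorem no_palindromic_subword_of_period (W : List (Σ i, G i)) (γ : ℕ)
    (hred : Reduced W) (hγ₁ : 1 ≤ γ) (hγ : γ < W.length)
    (hper : HasPeriod W γ)
    (h₂ : ∀ x ∈ W, orderOf x.2 ≠ 2) :
    ∀ (w : List (Σ i, G i)) (r : Σ i, G i),
      γ ≤ 2 * w.length → ¬ (w ++ [r] ++ invWord w) <:+: W := by
  obtain ⟨hnt, hch⟩ := hred
  have hchain : ∀ i (h : i + 1 < W.length),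
      (W[i]'(by omega)).1 ≠ (W[i+1]'h).1 := by
    intro i h
    have := List.isChain_iff_getElem.mp hch i (by omega)
    simpa using this
  -- the period is even
  have heven : γ % 2 = 0 := by
    by_contra hodd
    have h0 : 0 < W.length := by omega
    have alt : ∀ i (h : i < W.length),
        (W[i]'h).1 = xor (decide (i % 2 = 1)) (W[0]'h0).1 := by
      intro i
      induction i with
      | zero => intro h; simp
      | succ k ih =>
        intro h
        have hk : k < W.length := by omega
        have hne := hchain k h
        have hflip : (W[k+1]'h).1 = !(W[k]'hk).1 := by
          revert hne
          cases (W[k+1]'h).1 <;> cases (W[k]'hk).1 <;> simp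
        rw [hflip, ih hk]
        have hmod : decide ((k+1) % 2 = 1) = !decide (k % 2 = 1) := by
          by_cases hc : k % 2 = 1 <;> simp [hc] <;> omega
        rw [hmod]
        cases decide (k % 2 = 1) <;> cases (W[0]'h0).1 <;> rfl
    have hper0 := hper 0 (by omega)
    simp only [Nat.zero_add] at hper0
    rw [List.getElem?_eq_getElem h0, List.getElem?_eq_getElem hγ] at hper0
    have hper0' : (W[0]'h0) = W[γ]'hγ := Option.some.inj hper0
    have h2 := alt γ hγ
    have hγ1 : γ % 2 = 1 := by omega
    rw [← hper0', hγ1] at h2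
    cases hb : (W[0]'h0).1 <;> rw [hb] at h2 <;> simp at h2
  -- main argument
  intro w r hlen ⟨p, t, hW⟩
  set m := w.length with hm
  set q := γ / 2 with hq
  have hq2 : 2 * q = γ := by omega
  have hq1 : 1 ≤ q := by omega
  have hqm : q ≤ m := by omega
  have hul : (w ++ [r] ++ invWord w).length = 2 * m + 1 := by
    simp [invWord]; omega
  have hWl : W.length = p.length + (2 * m + 1) + t.length := by
    rw [← hW]; simp [invWord]; omega
  set n := p.length with hn
  -- indexing into W via the subword
  have hWu : ∀ j, j < 2 * m + 1 →
      W[n + j]? = (w ++ [r] ++ invWord w)[j]? := by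
    intro j hj
    rw [← hW, List.getElem?_append_left (by simp [invWord]; omega),
      List.getElem?_append_right (by omega)]
    congr 1
    omega
  have hmq : m - q < m := by omega
  -- position m - q
  have hu1 : W[n + (m - q)]? = some (w[m - q]'hmq) := by
    rw [hWu _ (by omega), List.getElem?_append_left (by simp; omega),
      List.getElem?_append_left (by omega), List.getElem?_eq_getElem hmq]
  -- position m + q
  have hu2 : W[n + (m + q)]? =
      some ⟨(w[m - q]'hmq).1, (w[m - q]'hmq).2⁻¹⟩ := by
    rw [hWu _ (by omega), List.getElem?_append_right (by simp; omega)]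
    rw [invWord, List.getElem?_reverse (by simp; omega), List.getElem?_map]
    have h1 : m + q - (w ++ [r]).length = q - 1 := by simp; omega
    have h2 : (List.map (fun x => (⟨x.1, x.2⁻¹⟩ : Σ i, G i)) w).length - 1 - (q - 1)
        = m - q := by simp; omega
    rw [h1, h2, List.getElem?_eq_getElem hmq]
    rfl
  -- the period identifies the two positions
  have hkey : W[n + (m - q)]? = W[n + (m + q)]? := by
    have := hper (n + (m - q)) (by omega)
    have he : n + (m - q) + γ = n + (m + q) := by omega
    rwa [he] at this
  rw [hu1, hu2] at hkey
  have hkey' := Option.some.inj hkey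
  set x := w[m - q]'hmq with hx
  have hx2 : x.2 = x.2⁻¹ := eq_of_heq (Sigma.ext_iff.mp hkey').2
  have hxW : x ∈ W := by
    rw [← hW]
    have : x ∈ w := List.getElem_mem hmq
    simp [this]
  have hxsq : x.2 ^ 2 = 1 := by
    have h' : x.2 * x.2 = x.2 * x.2⁻¹ := by rw [← hx2]
    rw [pow_two, h', mul_inv_cancel]
  exact h₂ x hxW (orderOf_eq_prime hxsq (hnt x hxW))

end FreeProductWords
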